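/- Assume ⟨α_i, α_j⟩ ≤ 0 for i ≠ j. Then the Langlands retraction 𝔏 : V → V⁺ is order-preserving: x ≤ y implies 𝔏(x) ≤ 𝔏(y), where ≤ is the order defined by the cone V^pos. -/

import Mathlib

open scoped InnerProductSpace
open Finset

/-- The closed convex cone generated by a finite family of vectors:
the set of non-negative linear combinations. -/
def coneGen {V : Type*} [AddCommGroup V] [Module ℝ V] {ι : Type*} [Fintype ι]
    (v : ι → V) : Set V :=
  {x | ∃ c : ι → ℝ, (∀ i, 0 ≤ c i) ∧ x = ∑ i, c i • v i}

/-- `y` is a point of `K` closest to `x`. -/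
def IsClosestPoint {V : Type*} [NormedAddCommGroup V] (K : Set V) (x y : V) : Prop :=
  y ∈ K ∧ ∀ z ∈ K, dist x y ≤ dist x z

section Aux
variable {V ι : Type*} [NormedAddCommGroup V] [InnerProductSpace ℝ V] [Fintype ι]
  {v : ι → V}

lemma coneGen_zero (v : ι → V) : 0 ∈ coneGen v := ⟨0, fun _ => le_refl 0, by simp⟩

lemma coneGen_add {x y : V} (hx : x ∈ coneGen v) (hy : y ∈ coneGen v) :
    x + y ∈ coneGen v := by
  obtain ⟨c, hc, rfl⟩ := hx; obtain ⟨c', hc', rfl⟩ := hy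
  exact ⟨c + c', fun i => add_nonneg (hc i) (hc' i), by simp [add_smul, Finset.sum_add_distrib]⟩

lemma coneGen_smul {t : ℝ} {x : V} (ht : 0 ≤ t) (hx : x ∈ coneGen v) :
    t • x ∈ coneGen v := by
  obtain ⟨c, hc, rfl⟩ := hx
  exact ⟨fun i => t * c i, fun i => mul_nonneg ht (hc i), by simp [Finset.smul_sum, smul_smul]⟩

lemma coneGen_mem [DecidableEq ι] (v : ι → V) (i : ι) : v i ∈ coneGen v := by
  exact ⟨fun j => if j = i then 1 else 0,
    fun j => by dsimp only; split <;> norm_num, by simp⟩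

lemma coneGen_convex (v : ι → V) : Convex ℝ (coneGen v) :=
  fun _ hx _ hy _ _ ha hb _ => coneGen_add (coneGen_smul ha hx) (coneGen_smul hb hy)

lemma closestPoint_inner {K : Set V} (hK : Convex ℝ K) {x y : V}
    (h : IsClosestPoint K x y) : ∀ z ∈ K, ⟪x - y, z - y⟫_ℝ ≤ 0 := by
  have hne : Nonempty K := ⟨⟨y, h.1⟩⟩
  rw [← norm_eq_iInf_iff_real_inner_le_zero hK h.1]
  refine le_antisymm (le_ciInf fun w => ?_) ?_
  · have := h.2 w w.2; simpa [dist_eq_norm] using this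
  · exact ciInf_le ⟨0, by rintro r ⟨w, hw⟩; exact hw ▸ norm_nonneg _⟩ (⟨y, h.1⟩ : K)

end Aux

/-- For an obtuse basis, the Langlands retraction `𝔏` is order-preserving:
`x ≤ y` implies `𝔏(x) ≤ 𝔏(y)` for the order defined by the cone `V^pos`. -/
theorem langlands_retraction_monotone
    {V ι : Type*} [NormedAddCommGroup V] [InnerProductSpace ℝ V] [FiniteDimensional ℝ V]
    [Fintype ι] [DecidableEq ι] (b : Module.Basis ι ℝ V) (ω : ι → V)
    (hω : ∀ i j, ⟪ω i, b j⟫_ℝ = if i = j then 1 else 0)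
    (hobtuse : ∀ i j, i ≠ j → ⟪(b i : V), b j⟫_ℝ ≤ 0)
    (x y Lx Ly : V) (hxy : y - x ∈ coneGen (⇑b))
    (hLx : IsClosestPoint (coneGen ω) x Lx) (hLy : IsClosestPoint (coneGen ω) y Ly) :
    Ly - Lx ∈ coneGen (⇑b) := by
  classical
  -- inner products with generators of either family pick out coefficients
  have rep_inner : ∀ (c : ι → ℝ) (i : ι), ⟪∑ j, c j • ω j, b i⟫_ℝ = c i := by
    intro c i
    rw [sum_inner]
    simp [real_inner_smul_left, hω]
  have rep_inner' : ∀ (c : ι → ℝ) (i : ι), ⟪ω i, ∑ j, c j • b j⟫_ℝ = c i := by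
    intro c i
    rw [inner_sum]
    simp [real_inner_smul_right, hω]
  have coord : ∀ (w : V) (i : ι), ⟪ω i, w⟫_ℝ = b.repr w i := by
    intro w i
    conv_lhs => rw [← b.sum_repr w]
    exact rep_inner' _ i
  have hd_rep : ∀ w : V, w = ∑ i, (⟪ω i, w⟫_ℝ) • b i := by
    intro w; simp_rw [coord]; exact (b.sum_repr w).symm
  -- variational inequalities
  have VIx := closestPoint_inner (coneGen_convex ω) hLx
  have VIy := closestPoint_inner (coneGen_convex ω) hLy
  have hneg : ∀ {z Lz : V}, (∀ w ∈ coneGen ω, ⟪z - Lz, w - Lz⟫_ℝ ≤ 0) →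
      Lz ∈ coneGen ω → ∀ i, 0 ≤ ⟪ω i, Lz - z⟫_ℝ := by
    intro z Lz VI hmem i
    have h := VI (Lz + ω i) (coneGen_add hmem (coneGen_mem ω i))
    have h' : ⟪z - Lz, ω i⟫_ℝ ≤ 0 := by simpa using h
    rw [real_inner_comm, ← neg_sub z Lz, inner_neg_left]
    linarith
  have hxneg : ∀ i, 0 ≤ ⟪ω i, Lx - x⟫_ℝ := hneg VIx hLx.1
  have hyneg : ∀ i, 0 ≤ ⟪ω i, Ly - y⟫_ℝ := hneg VIy hLy.1
  -- complementarity for x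
  obtain ⟨cL, hcL, hLrep⟩ := hLx.1
  have hcompx : ⟪x - Lx, Lx⟫_ℝ = 0 := by
    have h1 := VIx 0 (coneGen_zero ω)
    have h2 := VIx ((2:ℝ) • Lx) (coneGen_smul (by norm_num) hLx.1)
    have e : (2:ℝ) • Lx - Lx = Lx := by
      rw [two_smul]; abel
    rw [e] at h2
    have h1' : 0 ≤ ⟪x - Lx, Lx⟫_ℝ := by
      have : ⟪x - Lx, (0:V) - Lx⟫_ℝ = -⟪x - Lx, Lx⟫_ℝ := by
        rw [zero_sub, inner_neg_right]
      linarith [h1, this ▸ h1]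
    linarith
  have hsum0 : ∑ i, cL i * ⟪x - Lx, ω i⟫_ℝ = 0 := by
    have e : ⟪x - Lx, ∑ i, cL i • ω i⟫_ℝ = ∑ i, cL i * ⟪x - Lx, ω i⟫_ℝ := by
      rw [inner_sum]; simp [real_inner_smul_right]
    rw [← e, ← hLrep]; exact hcompx
  have hcomp : ∀ i, cL i * ⟪ω i, Lx - x⟫_ℝ = 0 := by
    have hterms : ∀ i ∈ Finset.univ, cL i * ⟪x - Lx, ω i⟫_ℝ ≤ 0 := by
      intro i _
      have : ⟪x - Lx, ω i⟫_ℝ ≤ 0 := by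
        have := hxneg i
        rw [real_inner_comm, ← neg_sub x Lx, inner_neg_left] at this
        linarith
      exact mul_nonpos_of_nonneg_of_nonpos (hcL i) this
    have := (Finset.sum_eq_zero_iff_of_nonpos hterms).mp hsum0
    intro i
    have hi := this i (Finset.mem_univ i)
    have e : ⟪ω i, Lx - x⟫_ℝ = -⟪x - Lx, ω i⟫_ℝ := by
      rw [real_inner_comm, ← neg_sub x Lx, inner_neg_left]
    rw [e]; linarith [hi, mul_neg (cL i) (⟪x - Lx, ω i⟫_ℝ)]
  have haL : ∀ i, ⟪Lx, b i⟫_ℝ = cL i := by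
    intro i; rw [hLrep]; exact rep_inner cL i
  -- nonnegativity of Ly coefficients
  have hayL : ∀ i, 0 ≤ ⟪Ly, b i⟫_ℝ := by
    intro i
    obtain ⟨c', hc', hrep'⟩ := hLy.1
    rw [hrep', rep_inner]; exact hc' i
  -- coefficients of y - x are nonnegative
  have hs : ∀ i, 0 ≤ ⟪ω i, y - x⟫_ℝ := by
    intro i
    obtain ⟨cs, hcs, hsrep⟩ := hxy
    rw [hsrep, rep_inner']; exact hcs i
  set d := Ly - Lx with hd
  set n : ι → ℝ := fun i => max (-(⟪ω i, d⟫_ℝ)) 0 with hn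
  set p : ι → ℝ := fun i => max (⟪ω i, d⟫_ℝ) 0 with hp
  set N : V := ∑ i, n i • b i with hN
  have hn_nonneg : ∀ i, 0 ≤ n i := fun i => le_max_right _ _
  have hp_nonneg : ∀ i, 0 ≤ p i := fun i => le_max_right _ _
  -- decomposition of d-coordinates
  have hsplit : ∀ i, ⟪ω i, d⟫_ℝ = ⟪ω i, y - x⟫_ℝ + ⟪ω i, Ly - y⟫_ℝ - ⟪ω i, Lx - x⟫_ℝ := by
    intro i
    have : d = (y - x) + (Ly - y) - (Lx - x) := by rw [hd]; abel
    rw [this, inner_sub_right, inner_add_right]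
  -- Claim 1 : 0 ≤ ⟪d, N⟫
  have claim1 : 0 ≤ ⟪d, N⟫_ℝ := by
    rw [hN, inner_sum]
    apply Finset.sum_nonneg
    intro i _
    rw [real_inner_smul_right]
    rcases eq_or_lt_of_le (hn_nonneg i) with h0 | h0
    · rw [← h0, zero_mul]
    · -- n i > 0 hence ⟪ω i, d⟫ < 0 hence cL i = 0
      have hdi : ⟪ω i, d⟫_ℝ < 0 := by
        by_contra hcon
        push_neg at hcon
        have : n i = 0 := max_eq_right (by linarith)
        linarith
      have hcx : 0 < ⟪ω i, Lx - x⟫_ℝ := by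
        have := hsplit i
        have := hs i; have := hyneg i
        linarith [hsplit i]
      have hcL0 : cL i = 0 := by
        have := hcomp i
        rcases mul_eq_zero.mp this with h | h
        · exact h
        · linarith
      have hLxb : ⟪Lx, b i⟫_ℝ = 0 := by rw [haL]; exact hcL0
      have : ⟪d, b i⟫_ℝ = ⟪Ly, b i⟫_ℝ := by
        rw [hd, inner_sub_left, hLxb, sub_zero]
      rw [this]
      exact mul_nonneg (hn_nonneg i) (hayL i)
  -- Claim 2 : ⟪d + N, N⟫ ≤ 0
  have hpn : ∀ i, p i = ⟪ω i, d⟫_ℝ + n i := by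
    intro i
    rcases le_total (⟪ω i, d⟫_ℝ) 0 with h | h
    · rw [hp, hn]; dsimp only
      rw [max_eq_right h, max_eq_left (by linarith)]; ring
    · rw [hp, hn]; dsimp only
      rw [max_eq_left h, max_eq_right (by linarith)]; ring
  have hdpN : d + N = ∑ i, p i • b i := by
    conv_lhs => rw [hd_rep d, hN]
    rw [← Finset.sum_add_distrib]
    apply Finset.sum_congr rfl
    intro i _
    rw [hpn i, add_smul]
  have claim2 : ⟪d + N, N⟫_ℝ ≤ 0 := by
    rw [hdpN, hN, sum_inner]
    apply Finset.sum_nonpos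
    intro i _
    rw [real_inner_smul_left, inner_sum]
    simp_rw [real_inner_smul_right]
    rw [Finset.mul_sum]
    apply Finset.sum_nonpos
    intro j _
    by_cases hij : i = j
    · subst hij
      have hpn0 : p i * n i = 0 := by
        rcases le_total (⟪ω i, d⟫_ℝ) 0 with h | h
        · rw [hp]; dsimp only; rw [max_eq_right h, zero_mul]
        · rw [hn]; dsimp only; rw [max_eq_right (by linarith), mul_zero]
      rw [show p i * (n i * ⟪b i, b i⟫_ℝ) = (p i * n i) * ⟪b i, b i⟫_ℝ by ring,
        hpn0, zero_mul]
    · exact mul_nonpos_of_nonneg_of_nonpos (hp_nonneg i)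
        (mul_nonpos_of_nonneg_of_nonpos (hn_nonneg j) (hobtuse i j hij))
  -- conclude N = 0
  have hNN : ⟪N, N⟫_ℝ = 0 := by
    have e : ⟪d + N, N⟫_ℝ = ⟪d, N⟫_ℝ + ⟪N, N⟫_ℝ := inner_add_left _ _ _
    have := real_inner_self_nonneg (x := N)
    linarith [e ▸ claim2]
  have hN0 : N = 0 := inner_self_eq_zero.mp hNN
  have hn0 : ∀ i, n i = 0 := by
    intro i
    have := rep_inner' n i
    rw [← hN, hN0, inner_zero_right] at this
    exact this.symm
  have hdnn : ∀ i, 0 ≤ ⟪ω i, d⟫_ℝ := by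
    intro i
    have := hn0 i
    rw [hn] at this; dsimp only at this
    by_contra hcon
    push_neg at hcon
    rw [max_eq_left (by linarith)] at this
    linarith
  exact ⟨fun i => ⟪ω i, d⟫_ℝ, hdnn, hd_rep d⟩
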